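/- For every real z ∈ [0,1] one has h(1−z) ≤ z − z²/2 − z³/6, and for every real z ∈ [0, 0.6] one has z − z²/2 − z³/4 ≤ h(1−z). -/

import Mathlib

/-- `h x = -x log x` (with `h 0 = 0`, since `Real.log 0 = 0`). -/
noncomputable def entH (x : ℝ) : ℝ := -x * Real.log x

/-- `H x = h x + h (1 - x)`. -/
noncomputable def entHH (x : ℝ) : ℝ := entH x + entH (1 - x)

/-- The rate function `F(x,t)`. -/
noncomputable def entF (x t : ℝ) : ℝ :=
  (1 / 2) * entH (t * x) + entH ((1 - t) * x) + (1 / 2) * entH (1 - (2 - t) * x) - entHH x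

open Real Set

lemma hd_log {z : ℝ} (hz : z < 1) :
    HasDerivAt (fun y : ℝ => Real.log (1 - y)) (-(1 / (1 - z))) z := by
  have h1 : HasDerivAt (fun y : ℝ => 1 - y) (-1) z := by
    simpa using (hasDerivAt_id z).const_sub 1
  have hne : (1 : ℝ) - z ≠ 0 := by linarith
  have := h1.log hne
  convert this using 1
  field_simp

lemma hd_mul_log {z : ℝ} (hz : z < 1) :
    HasDerivAt (fun y : ℝ => (1 - y) * Real.log (1 - y)) (-Real.log (1 - z) - 1) z := by
  have h1 : HasDerivAt (fun y : ℝ => 1 - y) (-1) z := by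
    simpa using (hasDerivAt_id z).const_sub 1
  have hne : (1 : ℝ) - z ≠ 0 := by linarith
  have := h1.mul (hd_log hz)
  refine this.congr_deriv ?_
  field_simp
  ring

lemma cont_mul_log : Continuous (fun y : ℝ => (1 - y) * Real.log (1 - y)) :=
  Real.continuous_mul_log.comp (continuous_const.sub continuous_id)

lemma cont_log_on {a b : ℝ} (hb : b < 1) :
    ContinuousOn (fun y : ℝ => Real.log (1 - y)) (Set.Icc a b) := by
  apply ContinuousOn.log
  · exact (continuous_const.sub continuous_id).continuousOn
  · intro x hx
    have := hx.2
    intro h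
    have : x = 1 := by linarith
    linarith [hx.2, hb, this ▸ hx.2]

/-- `z + z²/2 ≤ -log(1-z)` on `[0,1)`. -/
lemma lemA {z : ℝ} (h0 : 0 ≤ z) (h1 : z < 1) :
    z + z ^ 2 / 2 ≤ -Real.log (1 - z) := by
  set f : ℝ → ℝ := fun y => -Real.log (1 - y) - y - y ^ 2 / 2 with hf
  have key : MonotoneOn f (Set.Icc 0 z) := by
    apply monotoneOn_of_hasDerivWithinAt_nonneg (f' := fun y => 1 / (1 - y) - 1 - y)
      (convex_Icc 0 z)
    · exact ((cont_log_on h1).neg.sub continuousOn_id).sub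
        ((continuous_pow 2).continuousOn.div_const 2)
    · intro x hx
      rw [interior_Icc] at hx
      have hx1 : x < 1 := lt_of_lt_of_le hx.2 h1.le
      have : HasDerivAt f (1 / (1 - x) - 1 - x) x := by
        have := ((hd_log hx1).neg.sub (hasDerivAt_id x)).sub
          ((hasDerivAt_pow 2 x).div_const 2)
        refine this.congr_deriv ?_
        push_cast
        ring
      exact this.hasDerivWithinAt
    · intro x hx
      rw [interior_Icc] at hx
      have hx1 : x < 1 := lt_of_lt_of_le hx.2 h1.le
      have h1x : (0:ℝ) < 1 - x := by linarith
      rw [div_sub' (ne_of_gt h1x), div_sub' (ne_of_gt h1x)]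
      apply div_nonneg _ h1x.le
      nlinarith [hx.1]
  have := key (Set.left_mem_Icc.2 h0) (Set.right_mem_Icc.2 h0) h0
  simp only [hf] at this
  simp only [sub_zero, Real.log_one, neg_zero, ne_eq] at this
  nlinarith [this]

/-- Upper bound. -/
lemma upper {z : ℝ} (h0 : 0 ≤ z) (h1 : z ≤ 1) :
    entH (1 - z) ≤ z - z ^ 2 / 2 - z ^ 3 / 6 := by
  set f : ℝ → ℝ := fun y => y - y ^ 2 / 2 - y ^ 3 / 6 + (1 - y) * Real.log (1 - y) with hf
  have key : MonotoneOn f (Set.Icc 0 1) := by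
    apply monotoneOn_of_hasDerivWithinAt_nonneg
      (f' := fun y => -y - y ^ 2 / 2 - Real.log (1 - y)) (convex_Icc 0 1)
    · exact ((continuousOn_id.sub ((continuous_pow 2).continuousOn.div_const 2)).sub
        ((continuous_pow 3).continuousOn.div_const 6)).add cont_mul_log.continuousOn
    · intro x hx
      rw [interior_Icc] at hx
      have : HasDerivAt f (-x - x ^ 2 / 2 - Real.log (1 - x)) x := by
        have := (((hasDerivAt_id x).sub ((hasDerivAt_pow 2 x).div_const 2)).sub
          ((hasDerivAt_pow 3 x).div_const 6)).add (hd_mul_log hx.2)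
        refine this.congr_deriv ?_
        push_cast
        ring
      exact this.hasDerivWithinAt
    · intro x hx
      rw [interior_Icc] at hx
      have := lemA hx.1.le hx.2
      linarith
  have h0m : f 0 = 0 := by simp [hf]
  have := key (Set.left_mem_Icc.2 zero_le_one) ⟨h0, h1⟩ h0
  rw [h0m] at this
  simp only [hf] at this
  simp only [entH]
  nlinarith [this]

lemma exp_29_72 : Real.exp (29 / 72) < 3 / 2 := by
  have h := Real.exp_bound' (x := 29 / 72) (by norm_num) (by norm_num) (n := 5) (by norm_num)
  calc Real.exp (29 / 72) ≤ _ := h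
    _ < 3 / 2 := by
        norm_num [Finset.sum_range_succ, Nat.factorial]

lemma exp_183_200 : Real.exp (183 / 200) < 5 / 2 := by
  have h := Real.exp_bound' (x := 183 / 200) (by norm_num) (by norm_num) (n := 8) (by norm_num)
  calc Real.exp (183 / 200) ≤ _ := h
    _ < 5 / 2 := by
        norm_num [Finset.sum_range_succ, Nat.factorial]

lemma log_32 : (29 : ℝ) / 72 ≤ Real.log (3 / 2) :=
  (Real.le_log_iff_exp_le (by norm_num)).2 exp_29_72.le

lemma log_52 : (183 : ℝ) / 200 ≤ Real.log (5 / 2) :=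
  (Real.le_log_iff_exp_le (by norm_num)).2 exp_183_200.le

/-- The lower-bound difference function. -/
noncomputable def gfun (z : ℝ) : ℝ := -(1 - z) * Real.log (1 - z) - z + z ^ 2 / 2 + z ^ 3 / 4

lemma hd_gfun {z : ℝ} (hz : z < 1) :
    HasDerivAt gfun (Real.log (1 - z) + z + 3 * z ^ 2 / 4) z := by
  have := ((((hd_mul_log hz).neg.sub (hasDerivAt_id z)).add
    ((hasDerivAt_pow 2 z).div_const 2)).add ((hasDerivAt_pow 3 z).div_const 4))
  have heq : HasDerivAt (fun y : ℝ => -((1 - y) * Real.log (1 - y)) - y + y ^ 2 / 2 + y ^ 3 / 4)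
      (Real.log (1 - z) + z + 3 * z ^ 2 / 4) z := by
    refine this.congr_deriv ?_
    push_cast
    ring
  have : gfun = fun y : ℝ => -((1 - y) * Real.log (1 - y)) - y + y ^ 2 / 2 + y ^ 3 / 4 := by
    funext y; simp [gfun]; ring
  rw [this]
  exact heq

lemma cont_gfun : Continuous gfun := by
  have : gfun = fun y : ℝ => -((1 - y) * Real.log (1 - y)) - y + y ^ 2 / 2 + y ^ 3 / 4 := by
    funext y; simp [gfun]; ring
  rw [this]
  exact ((cont_mul_log.neg.sub continuous_id).add ((continuous_pow 2).div_const 2)).add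
    ((continuous_pow 3).div_const 4)

/-- derivative of g nonneg on [0,1/3]. -/
lemma gderiv_nonneg {z : ℝ} (h0 : 0 ≤ z) (h1 : z ≤ 1 / 3) :
    0 ≤ Real.log (1 - z) + z + 3 * z ^ 2 / 4 := by
  set f : ℝ → ℝ := fun y => Real.log (1 - y) + y + 3 * y ^ 2 / 4 with hf
  have key : MonotoneOn f (Set.Icc 0 (1 / 3)) := by
    apply monotoneOn_of_hasDerivWithinAt_nonneg
      (f' := fun y => -(1 / (1 - y)) + 1 + 3 * y / 2) (convex_Icc 0 (1 / 3))
    · exact ((cont_log_on (by norm_num)).add continuousOn_id).add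
        (((continuous_const.mul (continuous_pow 2)).div_const 4).continuousOn)
    · intro x hx
      rw [interior_Icc] at hx
      have hx1 : x < 1 := by linarith [hx.2]
      have : HasDerivAt f (-(1 / (1 - x)) + 1 + 3 * x / 2) x := by
        have := ((hd_log hx1).add (hasDerivAt_id x)).add
          (((hasDerivAt_pow 2 x).const_mul 3).div_const 4)
        refine this.congr_deriv ?_
        push_cast
        ring
      exact this.hasDerivWithinAt
    · intro x hx
      rw [interior_Icc] at hx
      have h1x : (0:ℝ) < 1 - x := by linarith [hx.2]
      have : -(1 / (1 - x)) + 1 + 3 * x / 2 = x * (1 - 3 * x) / (2 * (1 - x)) := by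
        field_simp
        ring
      rw [this]
      apply div_nonneg
      · nlinarith [hx.1, hx.2]
      · linarith
  have := key (Set.left_mem_Icc.2 (by norm_num)) ⟨h0, h1⟩ h0
  simp only [hf] at this
  simpa using this

lemma gfun_nonneg_left {z : ℝ} (h0 : 0 ≤ z) (h1 : z ≤ 1 / 3) : 0 ≤ gfun z := by
  have key : MonotoneOn gfun (Set.Icc 0 (1 / 3)) := by
    apply monotoneOn_of_hasDerivWithinAt_nonneg
      (f' := fun y => Real.log (1 - y) + y + 3 * y ^ 2 / 4) (convex_Icc 0 (1 / 3))
    · exact cont_gfun.continuousOn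
    · intro x hx
      rw [interior_Icc] at hx
      exact (hd_gfun (by linarith [hx.2])).hasDerivWithinAt
    · intro x hx
      rw [interior_Icc] at hx
      exact gderiv_nonneg hx.1.le hx.2.le
  have := key (Set.left_mem_Icc.2 (by norm_num)) ⟨h0, h1⟩ h0
  simpa [gfun] using this

lemma gfun_third : 0 ≤ gfun (1 / 3) := by
  have h23 : (1 : ℝ) - 1 / 3 = 2 / 3 := by norm_num
  have hlog : Real.log (2 / 3) = -Real.log (3 / 2) := by
    rw [show (2 : ℝ) / 3 = (3 / 2)⁻¹ by norm_num, Real.log_inv]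
  simp only [gfun, h23, hlog]
  nlinarith [log_32]

lemma gfun_end : 0 ≤ gfun (3 / 5) := by
  have h25 : (1 : ℝ) - 3 / 5 = 2 / 5 := by norm_num
  have hlog : Real.log (2 / 5) = -Real.log (5 / 2) := by
    rw [show (2 : ℝ) / 5 = (5 / 2)⁻¹ by norm_num, Real.log_inv]
  simp only [gfun, h25, hlog]
  nlinarith [log_52]

lemma gfun_concave : ConcaveOn ℝ (Set.Icc (1 / 3 : ℝ) (3 / 5)) gfun := by
  apply AntitoneOn.concaveOn_of_deriv (convex_Icc _ _) cont_gfun.continuousOn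
  · intro x hx
    rw [interior_Icc] at hx
    exact (hd_gfun (by linarith [hx.2])).differentiableAt.differentiableWithinAt
  · -- deriv gfun is antitone on Ioo (1/3) (3/5)
    rw [interior_Icc]
    have hderiv : ∀ x ∈ Set.Ioo (1 / 3 : ℝ) (3 / 5),
        deriv gfun x = Real.log (1 - x) + x + 3 * x ^ 2 / 4 := fun x hx =>
      (hd_gfun (by linarith [hx.2])).deriv
    have key : AntitoneOn (fun y : ℝ => Real.log (1 - y) + y + 3 * y ^ 2 / 4)
        (Set.Icc (1 / 3 : ℝ) (3 / 5)) := by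
      apply antitoneOn_of_hasDerivWithinAt_nonpos
        (f' := fun y => -(1 / (1 - y)) + 1 + 3 * y / 2) (convex_Icc _ _)
      · exact ((cont_log_on (by norm_num)).add continuousOn_id).add
          (((continuous_const.mul (continuous_pow 2)).div_const 4).continuousOn)
      · intro x hx
        rw [interior_Icc] at hx
        have hx1 : x < 1 := by linarith [hx.2]
        have : HasDerivAt (fun y : ℝ => Real.log (1 - y) + y + 3 * y ^ 2 / 4)
            (-(1 / (1 - x)) + 1 + 3 * x / 2) x := by
          have := ((hd_log hx1).add (hasDerivAt_id x)).add
            (((hasDerivAt_pow 2 x).const_mul 3).div_const 4)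
          refine this.congr_deriv ?_
          push_cast
          ring
        exact this.hasDerivWithinAt
      · intro x hx
        rw [interior_Icc] at hx
        have h1x : (0:ℝ) < 1 - x := by linarith [hx.2]
        have : -(1 / (1 - x)) + 1 + 3 * x / 2 = -(x * (3 * x - 1)) / (2 * (1 - x)) := by
          field_simp
          ring
        rw [this]
        apply div_nonpos_of_nonpos_of_nonneg
        · nlinarith [hx.1, hx.2]
        · linarith
    intro x hx y hy hxy
    rw [hderiv x hx, hderiv y hy]
    exact key (Set.mem_Icc_of_Ioo hx) (Set.mem_Icc_of_Ioo hy) hxy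

lemma gfun_nonneg_right {z : ℝ} (h0 : 1 / 3 ≤ z) (h1 : z ≤ 3 / 5) : 0 ≤ gfun z := by
  set a : ℝ := (3 / 5 - z) / (4 / 15) with ha
  set b : ℝ := (z - 1 / 3) / (4 / 15) with hb
  have haz : 0 ≤ a := by apply div_nonneg <;> linarith
  have hbz : 0 ≤ b := by apply div_nonneg <;> linarith
  have hab : a + b = 1 := by field_simp [ha, hb]; ring
  have hcomb : a • (1 / 3 : ℝ) + b • (3 / 5 : ℝ) = z := by
    simp only [smul_eq_mul, ha, hb]
    field_simp
    ring
  have := gfun_concave.2 (Set.left_mem_Icc.2 (by norm_num))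
    (Set.right_mem_Icc.2 (by norm_num)) haz hbz hab
  rw [hcomb] at this
  have h1 := gfun_third
  have h2 := gfun_end
  simp only [smul_eq_mul] at this
  nlinarith

theorem stmt_16 :
    (∀ z ∈ Set.Icc (0 : ℝ) 1, entH (1 - z) ≤ z - z ^ 2 / 2 - z ^ 3 / 6) ∧
    (∀ z ∈ Set.Icc (0 : ℝ) 0.6, z - z ^ 2 / 2 - z ^ 3 / 4 ≤ entH (1 - z)) := by
  constructor
  · intro z hz
    exact upper hz.1 hz.2
  · intro z hz
    have h6 : z ≤ 3 / 5 := by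
      have := hz.2
      norm_num at this
      linarith
    have h := hz.1
    have key : 0 ≤ gfun z := by
      rcases le_or_gt z (1 / 3) with hc | hc
      · exact gfun_nonneg_left h hc
      · exact gfun_nonneg_right hc.le h6
    simp only [gfun, entH] at key ⊢
    nlinarith [key]
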